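/- Let X be a compact Hausdorff space, and let A, B ⊂ X be disjoint closed subsets. Suppose for every x ∈ X \ (A ∪ B) there is a continuous path L_x : [0,∞] → X with L_x(0) ∈ A, L_x(∞) ∈ B, and L_x(t) ∈ X \ (A ∪ B) for t ∈ (0,∞), with L_x(1) = x, such that all points L_x(t) for t ∈ (0,∞) are equivalent to x under a given equivalence relation ∼ on X \ (A ∪ B). Then there exist disjoint open sets W₁ ⊇ A, W₂ ⊇ B, and the compact set W₃ = X \ (W₁ ∪ W₂) meets every ∼-equivalence class of X \ (A ∪ B); consequently the quotient (X \ (A ∪ B))/∼ is compact. -/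

import Mathlib

open scoped ENNReal

/-- in a compact Hausdorff space `X` with disjoint closed sets `A, B`, if
every point of `X \ (A ∪ B)` lies on a continuous path `L : [0,∞] → X` from `A` to `B`
staying in `X \ (A ∪ B)` for `t ∈ (0,∞)` and consisting of points equivalent (for a
given setoid `s` on `X \ (A ∪ B)`) to the given point, then there are disjoint open
neighbourhoods `W₁ ⊇ A`, `W₂ ⊇ B` such that the compact set `X \ (W₁ ∪ W₂)` meets every
equivalence class, and the quotient `(X \ (A ∪ B)) / s` is compact. -/
theorem stmt_13 {X : Type*} [TopologicalSpace X] [CompactSpace X] [T2Space X]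
    (A B : Set X) (hA : IsClosed A) (hB : IsClosed B) (hAB : Disjoint A B)
    (s : Setoid ↥((A ∪ B)ᶜ))
    (hpath : ∀ x : ↥((A ∪ B)ᶜ), ∃ L : ℝ≥0∞ → X, Continuous L ∧
      L 0 ∈ A ∧ L ⊤ ∈ B ∧ L 1 = (x : X) ∧
      ∀ t : ℝ≥0∞, t ≠ 0 → t ≠ ⊤ →
        ∃ h : L t ∈ (A ∪ B)ᶜ, s.r ⟨L t, h⟩ x) :
    ∃ W₁ W₂ : Set X, IsOpen W₁ ∧ IsOpen W₂ ∧ Disjoint W₁ W₂ ∧ A ⊆ W₁ ∧ B ⊆ W₂ ∧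
      (∀ x : ↥((A ∪ B)ᶜ), ∃ y : ↥((A ∪ B)ᶜ), (y : X) ∉ W₁ ∪ W₂ ∧ s.r y x) ∧
      CompactSpace (Quotient s) := by
  obtain ⟨W₁, W₂, hW₁, hW₂, hAW, hBW, hdis⟩ := normal_separation hA hB hAB
  refine ⟨W₁, W₂, hW₁, hW₂, hdis, hAW, hBW, ?_⟩
  have hmeet : ∀ x : ↥((A ∪ B)ᶜ), ∃ y : ↥((A ∪ B)ᶜ), (y : X) ∉ W₁ ∪ W₂ ∧ s.r y x := by
    intro x
    obtain ⟨L, hLc, hL0, hLtop, -, hLt⟩ := hpath x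
    -- find t with L t ∉ W₁ ∪ W₂ using connectedness of ℝ≥0∞
    by_contra hcon
    push_neg at hcon
    have hcover : (Set.univ : Set ℝ≥0∞) ⊆ L ⁻¹' W₁ ∪ L ⁻¹' W₂ := by
      intro t _
      by_cases ht0 : t = 0
      · exact Or.inl (by simp [ht0]; exact hAW hL0)
      by_cases httop : t = ⊤
      · exact Or.inr (by simp [httop]; exact hBW hLtop)
      obtain ⟨h, hrel⟩ := hLt t ht0 httop
      by_contra hmem
      simp only [Set.mem_union, Set.mem_preimage] at hmem
      push_neg at hmem
      exact (hcon ⟨L t, h⟩ (by simpa [Set.mem_union] using hmem)) hrel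
    have hpre : IsPreconnected (Set.univ : Set ℝ≥0∞) :=
      Set.ordConnected_univ.isPreconnected
    obtain ⟨t, -, ht1, ht2⟩ := hpre (L ⁻¹' W₁) (L ⁻¹' W₂) (hW₁.preimage hLc)
      (hW₂.preimage hLc) hcover ⟨0, Set.mem_univ _, by simpa using hAW hL0⟩
      ⟨⊤, Set.mem_univ _, by simpa using hBW hLtop⟩
    exact hdis.ne_of_mem ht1 ht2 rfl
  refine ⟨hmeet, ?_⟩
  -- compactness of the quotient
  have hKc : IsCompact ((W₁ ∪ W₂)ᶜ : Set X) :=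
    (hW₁.union hW₂).isClosed_compl.isCompact
  have hsub : ((W₁ ∪ W₂)ᶜ : Set X) ⊆ (A ∪ B)ᶜ :=
    Set.compl_subset_compl.2 (Set.union_subset_union hAW hBW)
  have hK' : IsCompact (Subtype.val ⁻¹' ((W₁ ∪ W₂)ᶜ) : Set ↥((A ∪ B)ᶜ)) := by
    rw [Topology.IsEmbedding.subtypeVal.isCompact_iff, Subtype.image_preimage_coe,
      Set.inter_eq_right.2 hsub]
    exact hKc
  refine ⟨?_⟩
  have himg : Quotient.mk s '' (Subtype.val ⁻¹' ((W₁ ∪ W₂)ᶜ)) = Set.univ := by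
    refine Set.eq_univ_of_forall fun q => ?_
    obtain ⟨x, rfl⟩ := Quotient.exists_rep q
    obtain ⟨y, hy, hrel⟩ := hmeet x
    exact ⟨y, hy, Quotient.sound hrel⟩
  rw [← himg]
  exact hK'.image continuous_quotient_mk'
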